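/- An accuracy-only noise model with arbitrary priors is captured exactly by a level-1 IRT model: defining c_i = −log(1/p_i − 1) and d^ℓ = log((1/q^ℓ − 1)/(k−1)), the logistic expression 1/(1 + exp(d^ℓ − c_i)) equals the posterior Pr[z* = ℓ | x_i = ℓ] = q^ℓ p_i / (q^ℓ p_i + ((1−p_i)/(k−1))(1 − q^ℓ)). -/

import Mathlib

theorem stmt_4 (k : ℕ) (hk : 2 ≤ k) (q p : ℝ)
    (hq : 0 < q) (hq1 : q < 1) (hp : 0 < p) (hp1 : p < 1) :
    1 / (1 + Real.exp (Real.log ((1 / q - 1) / ((k : ℝ) - 1)) - (-Real.log (1 / p - 1)))) =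
      q * p / (q * p + ((1 - p) / ((k : ℝ) - 1)) * (1 - q)) := by
  have hkk : (0 : ℝ) < (k : ℝ) - 1 := by
    have : (2 : ℝ) ≤ (k : ℝ) := by exact_mod_cast hk
    linarith
  have hA : (0 : ℝ) < (1 / q - 1) / ((k : ℝ) - 1) := by
    apply div_pos _ hkk
    have : 1 < 1 / q := by rw [lt_div_iff₀ hq]; linarith
    linarith
  have hB : (0 : ℝ) < 1 / p - 1 := by
    have : 1 < 1 / p := by rw [lt_div_iff₀ hp]; linarith
    linarith
  rw [sub_neg_eq_add, Real.exp_add, Real.exp_log hA, Real.exp_log hB]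
  have hden : q * p + (1 - p) / ((k : ℝ) - 1) * (1 - q) > 0 := by
    have := div_pos (by linarith : (0:ℝ) < 1 - p) hkk
    nlinarith [mul_pos hq hp, mul_pos this (by linarith : (0:ℝ) < 1 - q)]
  field_simp
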